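/- Let f, g : ℝ → ℝ₊ be integrable functions with ∫ f = ∫ g. Suppose that for every Borel measurable set A of finite Lebesgue measure there exists a Borel measurable set B with |B| = |A| such that ∫_A f(x) dx ≤ ∫_B g(x) dx. Then f is majorized by g, i.e., ∫_ℝ (f(x) - t)₊ dx ≤ ∫_ℝ (g(x) - t)₊ dx for all t ≥ 0. -/

import Mathlib

open MeasureTheory ENNReal

/-- Sufficient condition for majorization: if for every Borel set `A` of finite measure
there is a Borel set `B` of equal measure with `∫_A f ≤ ∫_B g`, then
`∫ (f - t)₊ ≤ ∫ (g - t)₊` for all `t ≥ 0`, i.e. `f` is majorized by `g`. -/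
theorem majorization_sufficient (f g : ℝ → ℝ)
    (hf0 : ∀ x, 0 ≤ f x) (hg0 : ∀ x, 0 ≤ g x)
    (hfi : Integrable f) (hgi : Integrable g)
    (heq : ∫ x, f x = ∫ x, g x)
    (h : ∀ A : Set ℝ, MeasurableSet A → volume A < ⊤ →
      ∃ B : Set ℝ, MeasurableSet B ∧ volume B = volume A ∧
        ∫ x in A, f x ≤ ∫ x in B, g x) :
    ∀ t : ℝ, 0 ≤ t → ∫ x, max (f x - t) 0 ≤ ∫ x, max (g x - t) 0 := by
  intro t ht
  rcases ht.eq_or_lt with rfl | ht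
  · simp only [sub_zero]
    have h1 : (fun x => max (f x) 0) = f := funext fun x => max_eq_left (hf0 x)
    have h2 : (fun x => max (g x) 0) = g := funext fun x => max_eq_left (hg0 x)
    rw [h1, h2, heq]
  -- t > 0
  obtain ⟨f', hf'sm, hff'⟩ := hfi.1
  have hfi' : Integrable f' := hfi.congr hff'
  -- integrability of (g - t)₊
  have hGm : AEStronglyMeasurable (fun x => max (g x - t) 0) volume :=
    (hgi.1.sub aestronglyMeasurable_const).sup aestronglyMeasurable_const
  have hGi : Integrable (fun x => max (g x - t) 0) := by
    refine hgi.mono hGm (Filter.Eventually.of_forall fun x => ?_)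
    rw [Real.norm_eq_abs, Real.norm_eq_abs, abs_of_nonneg (le_max_right _ _),
      abs_of_nonneg (hg0 x)]
    exact max_le (by linarith [ht, hg0 x]) (hg0 x)
  set A : Set ℝ := {x | t < f' x} with hA_def
  have hA : MeasurableSet A := measurableSet_lt measurable_const hf'sm.measurable
  have hAfin : volume A < ⊤ := hfi'.measure_gt_lt_top ht
  obtain ⟨B, hB, hBA, hle⟩ := h A hA hAfin
  have hBfin : volume B < ⊤ := hBA ▸ hAfin
  -- LHS equals ∫_A (f' - t)
  have key1 : ∫ x, max (f x - t) 0 = ∫ x in A, (f' x - t) := by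
    have e1 : ∫ x, max (f x - t) 0 = ∫ x, max (f' x - t) 0 :=
      integral_congr_ae (hff'.mono fun x hx => by simp only [hx])
    have e2 : (fun x => max (f' x - t) 0) = A.indicator (fun x => f' x - t) := by
      funext x
      by_cases hx : x ∈ A
      · rw [Set.indicator_of_mem hx]
        exact max_eq_left (by simp only [hA_def, Set.mem_setOf_eq] at hx; linarith)
      · rw [Set.indicator_of_notMem hx]
        exact max_eq_right (by simp only [hA_def, Set.mem_setOf_eq, not_lt] at hx; linarith)
    rw [e1, e2, integral_indicator hA]
  have hAconst : IntegrableOn (fun _ : ℝ => t) A := integrableOn_const hAfin.ne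
  have hBconst : IntegrableOn (fun _ : ℝ => t) B := integrableOn_const hBfin.ne
  have key2 : ∫ x in A, (f' x - t) = (∫ x in A, f x) - t * (volume A).toReal := by
    rw [integral_sub hfi'.integrableOn hAconst, setIntegral_const,
      integral_congr_ae (ae_restrict_of_ae (hff'.mono fun x hx => hx.symm)), smul_eq_mul,
      mul_comm, measureReal_def]
  have key3 : ∫ x in B, (g x - t) = (∫ x in B, g x) - t * (volume B).toReal := by
    rw [integral_sub hgi.integrableOn hBconst, setIntegral_const, smul_eq_mul, mul_comm, measureReal_def]
  have step : ∫ x in B, (g x - t) ≤ ∫ x in B, max (g x - t) 0 := by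
    refine setIntegral_mono (hgi.integrableOn.sub hBconst) hGi.integrableOn
      fun x => le_max_left _ _
  have last : ∫ x in B, max (g x - t) 0 ≤ ∫ x, max (g x - t) 0 :=
    setIntegral_le_integral hGi (Filter.Eventually.of_forall fun x => le_max_right _ _)
  calc ∫ x, max (f x - t) 0 = (∫ x in A, f x) - t * (volume A).toReal := by rw [key1, key2]
    _ ≤ (∫ x in B, g x) - t * (volume B).toReal := by rw [hBA]; linarith
    _ = ∫ x in B, (g x - t) := key3.symm
    _ ≤ ∫ x in B, max (g x - t) 0 := step
    _ ≤ ∫ x, max (g x - t) 0 := last
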